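/- For every n ≥ 1 and every finite set Y ⊆ Q with #Y = n, the quantization energy satisfies E(Y) ≥ (2π/5)·(3/(4π))^{5/3}·n^{−2/3}. -/

import Mathlib

open MeasureTheory

noncomputable section

/-- Euclidean 3-space. -/
abbrev E3 := EuclideanSpace ℝ (Fin 3)

/-- The closed unit cube Q = [0,1]³. -/
def Qcube : Set E3 := {x | ∀ i, x i ∈ Set.Icc (0 : ℝ) 1}

/-- The quantization energy E(Y) = ∫_Q dist(x,Y)² dx. -/
def quantE (Y : Finset E3) : ℝ := ∫ x in Qcube, (Metric.infDist x (↑Y : Set E3)) ^ 2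

/-- The Voronoi cell of a generator y ∈ Y, relative to Q. -/
def vorCell (Y : Finset E3) (y : E3) : Set E3 :=
  {x ∈ Qcube | ∀ z ∈ Y, dist x y ≤ dist x z}

/-- Y is a minimizer of the quantization energy among n-point subsets of Q. -/
def IsMinimizer (n : ℕ) (Y : Finset E3) : Prop :=
  (↑Y : Set E3) ⊆ Qcube ∧ Y.card = n ∧
    ∀ Z : Finset E3, (↑Z : Set E3) ⊆ Qcube → Z.card = n → quantE Y ≤ quantE Z

/-- ω₃ = 4π/3, the volume of the unit ball in ℝ³. -/
def omega3 : ℝ := 4 * Real.pi / 3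

/-- Γ₁ = (2/5)^{2/3} / 40. -/
def Gamma1 : ℝ := ((2 / 5 : ℝ) ^ ((2 : ℝ) / 3)) / 40

/-- Γ₃ = ω₃^{-1/5} Γ₁^{1/5}. -/
def Gamma3 : ℝ := omega3 ^ (-(1 : ℝ) / 5) * Gamma1 ^ ((1 : ℝ) / 5)

/-- Γ₅ = (1/4)(√(1 + 2⁴·3³/(5²·10³)) − 1) Γ₃. -/
def Gamma5 : ℝ :=
  (1 / 4) * (Real.sqrt (1 + (2 ^ 4 * 3 ^ 3 : ℝ) / (5 ^ 2 * 10 ^ 3)) - 1) * Gamma3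

/-- Γ₄, the diameter upper-bound constant. -/
def Gamma4 : ℝ :=
  (2 * (12 : ℝ) ^ ((1 : ℝ) / 4) * (16 : ℝ) ^ ((1 : ℝ) / 3) /
      (Real.pi ^ ((1 : ℝ) / 4) * omega3 ^ ((1 : ℝ) / 12))) *
    (Real.sqrt (1 + (2 ^ 4 * 3 ^ 3 : ℝ) / (5 ^ 2 * 10 ^ 3)) - 1) ^ (-(1 : ℝ) / 2) *
    ((5 ^ 2 * 10 ^ 3 : ℝ) / (2 ^ 2 * 3 ^ 3)) ^ ((1 : ℝ) / 4)

lemma measurableSet_Qcube : MeasurableSet Qcube := by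
  have : Qcube = ⋂ i, (fun x : E3 => x i) ⁻¹' Set.Icc (0:ℝ) 1 := by
    ext x; simp [Qcube]
  rw [this]
  exact MeasurableSet.iInter fun i =>
    ((EuclideanSpace.proj i : E3 →L[ℝ] ℝ).continuous.measurable) measurableSet_Icc

lemma volume_Qcube : volume Qcube = 1 := by
  have h : Qcube = (MeasurableEquiv.toLp 2 (Fin 3 → ℝ)).symm ⁻¹'
      (Set.univ.pi fun _ => Set.Icc (0:ℝ) 1) := by
    ext x
    simp only [Set.mem_preimage, Set.mem_univ_pi, Qcube, Set.mem_setOf_eq]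
    exact Iff.rfl
  rw [h, (EuclideanSpace.volume_preserving_symm_measurableEquiv_toLp (Fin 3)).measure_preimage
    ((MeasurableSet.univ_pi fun _ => measurableSet_Icc).nullMeasurableSet)]
  rw [volume_pi_pi]
  simp [Real.volume_Icc]

lemma volume_cball (y : E3) (r : ℝ) (hr : 0 ≤ r) :
    volume (Metric.closedBall y r) = ENNReal.ofReal (omega3 * r ^ 3) := by
  rw [EuclideanSpace.volume_closedBall]
  have hΓ : Real.Gamma ((Fintype.card (Fin 3) : ℝ) / 2 + 1) = 3 / 4 * Real.sqrt Real.pi := by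
    have h1 : ((Fintype.card (Fin 3) : ℝ) / 2 + 1) = (1/2 + 1) + 1 := by
      simp [Fintype.card_fin]; ring
    rw [h1, Real.Gamma_add_one (by norm_num), Real.Gamma_add_one (by norm_num),
      Real.Gamma_one_half_eq]
    ring
  rw [hΓ, ← ENNReal.ofReal_pow hr, ← ENNReal.ofReal_mul (by positivity)]
  congr 1
  have hπ : 0 < Real.pi := Real.pi_pos
  have hs : Real.sqrt Real.pi ^ 3 = Real.pi * Real.sqrt Real.pi := by
    rw [pow_succ, Real.sq_sqrt hπ.le]
  have hsne : Real.sqrt Real.pi ≠ 0 := by positivity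
  rw [Fintype.card_fin, hs, omega3]
  field_simp

lemma dist_le_in_Qcube {x y : E3} (hx : x ∈ Qcube) (hy : y ∈ Qcube) : dist x y ≤ 2 := by
  rw [EuclideanSpace.dist_eq]
  have hb : ∀ i, dist (x i) (y i) ^ 2 ≤ 1 := by
    intro i
    have h1 := hx i; have h2 := hy i
    simp only [Set.mem_Icc] at h1 h2
    rw [Real.dist_eq, sq_abs]
    nlinarith [h1.1, h1.2, h2.1, h2.2]
  calc Real.sqrt (∑ i, dist (x i) (y i) ^ 2) ≤ Real.sqrt 3 := by
        apply Real.sqrt_le_sqrt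
        calc (∑ i, dist (x i) (y i) ^ 2) ≤ ∑ _i : Fin 3, (1:ℝ) :=
              Finset.sum_le_sum fun i _ => hb i
          _ = 3 := by simp
    _ ≤ 2 := by
        rw [show (2:ℝ) = Real.sqrt 4 by rw [show (4:ℝ) = 2^2 by norm_num, Real.sqrt_sq]; norm_num]
        exact Real.sqrt_le_sqrt (by norm_num)

theorem stmt_9 (n : ℕ) (hn : 1 ≤ n) (Y : Finset E3)
    (hYQ : (↑Y : Set E3) ⊆ Qcube) (hcard : Y.card = n) :
    quantE Y ≥ (2 * Real.pi / 5) * ((3 : ℝ) / (4 * Real.pi)) ^ ((5 : ℝ) / 3) *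
      (n : ℝ) ^ (-(2 : ℝ) / 3) := by
  have hπ : 0 < Real.pi := Real.pi_pos
  have hω : 0 < omega3 := by rw [omega3]; positivity
  have hnpos : (0:ℝ) < n := by exact_mod_cast hn
  have hc : (0:ℝ) < 5 * n * omega3 := by positivity
  set r : ℝ := (2 / (5 * n * omega3)) ^ ((1:ℝ)/3) with hrdef
  have hrpos : 0 < r := Real.rpow_pos_of_pos (by positivity) _
  have hr3 : r ^ 3 = 2 / (5 * n * omega3) := by
    rw [hrdef, ← Real.rpow_natCast _ 3, ← Real.rpow_mul (by positivity)]
    norm_num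
  -- Y nonempty
  have hYne : (↑Y : Set E3).Nonempty := by
    rw [Finset.coe_nonempty, ← Finset.card_pos, hcard]; exact hn
  -- the union of balls
  set A : Set E3 := ⋃ y ∈ Y, Metric.closedBall y r with hAdef
  have hAmeas : MeasurableSet A :=
    MeasurableSet.biUnion Y.countable_toSet fun y _ => measurableSet_closedBall
  have hAvol : volume A ≤ (n : ENNReal) * ENNReal.ofReal (omega3 * r ^ 3) := by
    calc volume A ≤ ∑ y ∈ Y, volume (Metric.closedBall y r) :=
          measure_biUnion_finset_le Y _
      _ = ∑ _y ∈ Y, ENNReal.ofReal (omega3 * r ^ 3) := by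
          exact Finset.sum_congr rfl fun y _ => volume_cball y r hrpos.le
      _ = (n : ENNReal) * ENNReal.ofReal (omega3 * r ^ 3) := by
          rw [Finset.sum_const, hcard, nsmul_eq_mul]
  set B : Set E3 := Qcube \ A with hBdef
  have hBmeas : MeasurableSet B := measurableSet_Qcube.diff hAmeas
  have hBsub : B ⊆ Qcube := Set.diff_subset
  have hBfin : volume B ≠ ⊤ := by
    refine ne_of_lt (lt_of_le_of_lt (measure_mono hBsub) ?_)
    rw [volume_Qcube]; exact ENNReal.one_lt_top
  -- lower bound on infDist on B
  have hBlow : ∀ x ∈ B, r ≤ Metric.infDist x (↑Y : Set E3) := by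
    intro x hx
    obtain ⟨y, hyY, hy⟩ := Y.finite_toSet.isCompact.exists_infDist_eq_dist hYne x
    rw [hy]
    by_contra h
    push_neg at h
    exact hx.2 (Set.mem_biUnion hyY (Metric.mem_closedBall.mpr h.le))
  -- integrability
  have hcont : Continuous fun x : E3 => (Metric.infDist x (↑Y : Set E3)) ^ 2 :=
    (Metric.continuous_infDist_pt _).pow 2
  have hQfin : volume Qcube ≠ ⊤ := by rw [volume_Qcube]; exact ENNReal.one_ne_top
  have hint : IntegrableOn (fun x : E3 => (Metric.infDist x (↑Y : Set E3)) ^ 2) Qcube := by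
    apply Measure.integrableOn_of_bounded hQfin hcont.aestronglyMeasurable (M := 4)
    filter_upwards [ae_restrict_mem measurableSet_Qcube] with x hx
    obtain ⟨y, hyY⟩ := hYne
    have h1 : Metric.infDist x (↑Y : Set E3) ≤ 2 :=
      le_trans (Metric.infDist_le_dist_of_mem hyY) (dist_le_in_Qcube hx (hYQ hyY))
    have h0 : 0 ≤ Metric.infDist x (↑Y : Set E3) := Metric.infDist_nonneg
    rw [Real.norm_eq_abs, abs_of_nonneg (by positivity)]
    nlinarith
  have hintB : IntegrableOn (fun x : E3 => (Metric.infDist x (↑Y : Set E3)) ^ 2) B :=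
    hint.mono_set hBsub
  -- integral chain
  have step1 : r ^ 2 * (volume B).toReal ≤ quantE Y := by
    have h1 : r ^ 2 * (volume B).toReal
        ≤ ∫ x in B, (Metric.infDist x (↑Y : Set E3)) ^ 2 := by
      apply setIntegral_ge_of_const_le_real hBmeas hBfin _ hintB
      intro x hx
      have := hBlow x hx
      nlinarith [hrpos]
    have h2 : (∫ x in B, (Metric.infDist x (↑Y : Set E3)) ^ 2)
        ≤ ∫ x in Qcube, (Metric.infDist x (↑Y : Set E3)) ^ 2 := by
      apply setIntegral_mono_set hint
      · filter_upwards with x using by positivity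
      · exact HasSubset.Subset.eventuallyLE hBsub
    exact le_trans h1 h2
  -- volume lower bound
  have hAvolR : (volume A).toReal ≤ (n : ℝ) * (omega3 * r ^ 3) := by
    have hfin : ((n : ENNReal) * ENNReal.ofReal (omega3 * r ^ 3)) ≠ ⊤ := by
      exact ENNReal.mul_ne_top (ENNReal.natCast_ne_top n) ENNReal.ofReal_ne_top
    calc (volume A).toReal ≤ ((n : ENNReal) * ENNReal.ofReal (omega3 * r ^ 3)).toReal :=
          ENNReal.toReal_mono hfin hAvol
      _ = (n : ℝ) * (omega3 * r ^ 3) := by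
          rw [ENNReal.toReal_mul, ENNReal.toReal_ofReal (by positivity)]
          simp
  have hvolB : 1 - (n : ℝ) * (omega3 * r ^ 3) ≤ (volume B).toReal := by
    have hQsub : Qcube ⊆ B ∪ A := by
      intro x hx
      by_cases hA : x ∈ A
      · exact Or.inr hA
      · exact Or.inl ⟨hx, hA⟩
    have hAfin : volume A ≠ ⊤ := by
      refine ne_of_lt (lt_of_le_of_lt hAvol ?_)
      exact ENNReal.mul_lt_top (ENNReal.natCast_ne_top n).lt_top ENNReal.ofReal_ne_top.lt_top
    have h1 : (1:ENNReal) ≤ volume B + volume A := by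
      rw [← volume_Qcube]
      exact le_trans (measure_mono hQsub) (measure_union_le B A)
    have h2 : (1:ℝ) ≤ (volume B).toReal + (volume A).toReal := by
      have := ENNReal.toReal_mono (ENNReal.add_ne_top.mpr ⟨hBfin, hAfin⟩) h1
      rwa [ENNReal.toReal_one, ENNReal.toReal_add hBfin hAfin] at this
    linarith
  -- numeric: n * omega3 * r^3 = 2/5
  have hkey : (n : ℝ) * (omega3 * r ^ 3) = 2 / 5 := by
    rw [hr3]; field_simp
  have hmain : 3 / 5 * r ^ 2 ≤ quantE Y := by
    calc 3 / 5 * r ^ 2 = r ^ 2 * (1 - (n : ℝ) * (omega3 * r ^ 3)) := by rw [hkey]; ring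
      _ ≤ r ^ 2 * (volume B).toReal := by nlinarith [sq_nonneg r, hvolB]
      _ ≤ quantE Y := step1
  -- final arithmetic: target ≤ 3/5 r^2
  refine le_trans ?_ hmain
  set X : ℝ := ((3 : ℝ) / (4 * Real.pi)) ^ ((5 : ℝ) / 3) with hXdef
  set Z : ℝ := (n : ℝ) ^ (-(2 : ℝ) / 3) with hZdef
  have hXpos : 0 < X := Real.rpow_pos_of_pos (by positivity) _
  have hZpos : 0 < Z := Real.rpow_pos_of_pos hnpos _
  have hX3 : X ^ 3 = ((3 : ℝ) / (4 * Real.pi)) ^ (5:ℕ) := by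
    rw [hXdef, ← Real.rpow_natCast _ 3, ← Real.rpow_mul (by positivity),
      ← Real.rpow_natCast ((3 : ℝ) / (4 * Real.pi)) 5]
    norm_num
  have hZ3 : Z ^ 3 = ((n:ℝ) ^ (2:ℕ))⁻¹ := by
    rw [hZdef, ← Real.rpow_natCast _ 3, ← Real.rpow_mul hnpos.le]
    rw [show (-(2 : ℝ) / 3 * (3:ℕ) : ℝ) = -(2:ℕ) by push_cast; ring]
    rw [Real.rpow_neg hnpos.le, Real.rpow_natCast]
  apply le_of_pow_le_pow_left₀ (n := 3) (by norm_num) (by positivity)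
  have lhs3 : (2 * Real.pi / 5 * X * Z) ^ 3
      = (2 * Real.pi / 5) ^ 3 * ((3 : ℝ) / (4 * Real.pi)) ^ (5:ℕ) * ((n:ℝ) ^ (2:ℕ))⁻¹ := by
    rw [mul_pow, mul_pow, hX3, hZ3]
  rw [lhs3]
  have rhs3 : (3 / 5 * r ^ 2) ^ 3 = 27 / 125 * (r ^ 3) ^ 2 := by ring
  rw [rhs3, hr3, omega3]
  have hπne : Real.pi ≠ 0 := hπ.ne'
  have hnne : (n:ℝ) ≠ 0 := hnpos.ne'
  have e1 : (2 * Real.pi / 5) ^ 3 * ((3:ℝ) / (4 * Real.pi)) ^ (5:ℕ) * (((n:ℝ) ^ (2:ℕ))⁻¹)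
      = 1944 / 128000 * (Real.pi ^ 2 * (n:ℝ) ^ 2)⁻¹ := by
    field_simp; ring
  have e2 : 27 / 125 * ((2 / (5 * (n:ℝ) * (4 * Real.pi / 3))) ^ 2)
      = 972 / 50000 * (Real.pi ^ 2 * (n:ℝ) ^ 2)⁻¹ := by
    field_simp; ring
  rw [e1, e2]
  exact mul_le_mul_of_nonneg_right (by norm_num) (by positivity)
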